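/- arXiv:1904.08305 — 2 statements merged into one kernel-verified Lean document; each statement's English description precedes it below -/
import Mathlib

section
/- Let g : ℝ → ℝ be continuous and nonnegative, and let x : [0,T] → ℝ be piecewise linear on N equal sub-intervals of length δ = T/N, with constant speed v_n ∈ [0, V] on sub-interval n. Define for each n the durations δ̄_n = δ v_n / V and δ̂_n = δ − δ̄_n, a maximum-speed trajectory x̄ traversing the same segment [x((n−1)δ), x(nδ)] at speed V over duration δ̄_n, and a trajectory x̂ traversing the same segment at speed δ v_n / δ̂_n over duration δ̂_n (hovering when v_n = 0). Then ∫_0^T g(x(t)) dt = ∫_0^{T̄} g(x̄(t)) dt + ∫_0^{T̂} g(x̂(t)) dt, where T̄ = ∑_n δ̄_n and T̂ = ∑_n δ̂_n = T − T̄. -/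
open MeasureTheory Finset intervalIntegral

theorem fin_filter_sum_aux (N : ℕ) (f : Fin N → ℝ) (n : Fin N) :
    ∑ i ∈ Finset.univ.filter (· < n), f i
      = ∑ j ∈ Finset.range (n : ℕ), if h : j < N then f ⟨j, h⟩ else 0 := by
  set F : ℕ → ℝ := fun j => if h : j < N then (if j < (n:ℕ) then f ⟨j, h⟩ else 0) else 0 with hF
  have h1 : ∀ a : Fin N, (if a < n then f a else 0) = F (a : ℕ) := by
    rintro ⟨a, ha⟩; simp [hF, ha, Fin.lt_def]
  have h2 : ∀ j ∈ Finset.range (n : ℕ), (if h : j < N then f ⟨j, h⟩ else 0) = F j := by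
    intro j hj
    have hjn : j < (n : ℕ) := Finset.mem_range.mp hj
    have hjN : j < N := lt_of_lt_of_le hjn n.isLt.le
    simp [hF, hjN, hjn]
  have h3 : ∀ j ∈ Finset.range N, j ∉ Finset.range (n : ℕ) → F j = 0 := by
    intro j _ hj
    have : ¬ j < (n : ℕ) := fun h => hj (Finset.mem_range.mpr h)
    simp [hF, this]
  calc ∑ i ∈ Finset.univ.filter (· < n), f i
      = ∑ a : Fin N, if a < n then f a else 0 := Finset.sum_filter _ _
    _ = ∑ a : Fin N, F (a : ℕ) := Finset.sum_congr rfl (fun a _ => h1 a)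
    _ = ∑ j ∈ Finset.range N, F j := Fin.sum_univ_eq_sum_range F N
    _ = ∑ j ∈ Finset.range (n : ℕ), F j :=
        (Finset.sum_subset (Finset.range_subset_range.mpr n.isLt.le) h3).symm
    _ = ∑ j ∈ Finset.range (n : ℕ), if h : j < N then f ⟨j, h⟩ else 0 :=
        (Finset.sum_congr rfl h2).symm

theorem seg_eq_aux (g : ℝ → ℝ) (hg : Continuous g) {x : ℝ → ℝ} {a L A w : ℝ} (hL : 0 ≤ L)
    (hx : ∀ t ∈ Set.Ioc a (a + L), x t = A + w * (t - a)) :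
    IntervalIntegrable (fun t => g (x t)) volume a (a + L) ∧
    ∫ t in a..(a + L), g (x t) = ∫ s in (0:ℝ)..L, g (A + w * s) := by
  have hab : a ≤ a + L := by linarith
  have hcont : Continuous fun t => g (A + w * (t - a)) := by fun_prop
  have heq : Set.EqOn (fun t => g (x t)) (fun t => g (A + w * (t - a))) (Set.Ioc a (a + L)) :=
    fun t ht => by simp only []; rw [hx t ht]
  constructor
  · rw [intervalIntegrable_iff, Set.uIoc_of_le hab]
    exact (hcont.integrableOn_Ioc).congr_fun heq.symm measurableSet_Ioc
  · rw [integral_of_le hab, setIntegral_congr_fun measurableSet_Ioc heq, ← integral_of_le hab]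
    have := intervalIntegral.integral_comp_sub_right (a := a) (b := a + L) (fun s => g (A + w * s)) a
    simpa using this

theorem key_aux (g : ℝ → ℝ) (A V v δ : ℝ) (hV : 0 < V) (hδ : 0 < δ) (hv0 : 0 ≤ v) (hvV : v ≤ V) :
    ∫ t in (0:ℝ)..δ, g (A + v * t)
      = (∫ t in (0:ℝ)..(δ * v / V), g (A + V * t))
        + ∫ t in (0:ℝ)..(δ - δ * v / V), g (A + (δ * v / (δ - δ * v / V)) * t) := by
  rcases eq_or_lt_of_le hv0 with h0 | h0
  · simp [← h0]
  · rcases eq_or_lt_of_le hvV with hV' | hV'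
    · rw [← hV', mul_div_assoc, div_self h0.ne', mul_one, sub_self]
      simp
    · set δh := δ - δ * v / V with hδh
      have hδhpos : 0 < δh := by
        rw [hδh, sub_pos, div_lt_iff₀ hV]; nlinarith
      have hw : 0 < δ * v / δh := by positivity
      have e1 : ∫ t in (0:ℝ)..δ, g (A + v * t) = v⁻¹ • ∫ u in (0:ℝ)..(v * δ), g (A + u) := by
        have := integral_comp_mul_left (a := 0) (b := δ) (fun u => g (A + u)) h0.ne'
        simpa using this
      have hb : V * (δ * v / V) = v * δ := by field_simp
      have e2 : ∫ t in (0:ℝ)..(δ * v / V), g (A + V * t)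
          = V⁻¹ • ∫ u in (0:ℝ)..(v * δ), g (A + u) := by
        have := integral_comp_mul_left (a := 0) (b := δ * v / V) (fun u => g (A + u)) hV.ne'
        rw [mul_zero, hb] at this
        simpa using this
      have hc : (δ * v / δh) * δh = v * δ := by field_simp
      have e3 : ∫ t in (0:ℝ)..δh, g (A + (δ * v / δh) * t)
          = (δ * v / δh)⁻¹ • ∫ u in (0:ℝ)..(v * δ), g (A + u) := by
        have := integral_comp_mul_left (a := 0) (b := δh) (fun u => g (A + u)) hw.ne'
        rw [mul_zero, hc] at this
        simpa using this
      rw [e1, e2, e3, smul_eq_mul, smul_eq_mul, smul_eq_mul, ← add_mul]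
      congr 1
      rw [hδh]
      field_simp
      ring

theorem stmt_3 (g : ℝ → ℝ) (hg_cont : Continuous g) (hg_nn : ∀ y, 0 ≤ g y)
    (T V : ℝ) (hT : 0 < T) (hV : 0 < V)
    (N : ℕ) (hN : 0 < N) (v : Fin N → ℝ)
    (hv : ∀ n, 0 ≤ v n ∧ v n ≤ V)
    (δ : ℝ) (hδ : δ = T / N)
    (x xb xh : ℝ → ℝ)
    -- x is piecewise linear with speed v n on the n-th subinterval
    (hx : ∀ n : Fin N, ∀ t ∈ Set.Ioc ((n : ℝ) * δ) (((n : ℝ) + 1) * δ),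
      x t = x ((n : ℝ) * δ) + v n * (t - (n : ℝ) * δ))
    (δb δh : Fin N → ℝ)
    (hδb : ∀ n, δb n = δ * v n / V)
    (hδh : ∀ n, δh n = δ - δb n)
    -- xb traverses each segment at maximum speed V
    (hxb : ∀ n : Fin N, ∀ t ∈ Set.Ioc (∑ i ∈ Finset.univ.filter (· < n), δb i)
        ((∑ i ∈ Finset.univ.filter (· < n), δb i) + δb n),
      xb t = x ((n : ℝ) * δ) + V * (t - ∑ i ∈ Finset.univ.filter (· < n), δb i))
    -- xh traverses each segment at speed δ * v n / δh n (hovering when v n = 0)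
    (hxh : ∀ n : Fin N, ∀ t ∈ Set.Ioc (∑ i ∈ Finset.univ.filter (· < n), δh i)
        ((∑ i ∈ Finset.univ.filter (· < n), δh i) + δh n),
      xh t = x ((n : ℝ) * δ) + (δ * v n / δh n) * (t - ∑ i ∈ Finset.univ.filter (· < n), δh i)) :
    ∫ t in (0:ℝ)..T, g (x t)
      = (∫ t in (0:ℝ)..(∑ n, δb n), g (xb t))
        + ∫ t in (0:ℝ)..(∑ n, δh n), g (xh t) := by
  have hNpos : (0:ℝ) < N := Nat.cast_pos.mpr hN
  have hδpos : 0 < δ := by rw [hδ]; positivity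
  have hTN : (N:ℝ) * δ = T := by rw [hδ]; field_simp
  -- ℕ-extensions of δb, δh
  set db : ℕ → ℝ := fun j => if h : j < N then δb ⟨j, h⟩ else 0 with hdb
  set dh : ℕ → ℝ := fun j => if h : j < N then δh ⟨j, h⟩ else 0 with hdh
  set pa : ℕ → ℝ := fun k => (k : ℝ) * δ with hpa
  set pb : ℕ → ℝ := fun k => ∑ j ∈ Finset.range k, db j with hpb
  set pc : ℕ → ℝ := fun k => ∑ j ∈ Finset.range k, dh j with hpc
  have hδb_nn : ∀ n, 0 ≤ δb n := fun n => by
    rw [hδb n]; have := (hv n).1; positivity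
  have hδb_le : ∀ n, δb n ≤ δ := fun n => by
    rw [hδb n, div_le_iff₀ hV]
    nlinarith [(hv n).2, hδpos.le]
  have hδh_nn : ∀ n, 0 ≤ δh n := fun n => by
    rw [hδh n]; linarith [hδb_le n]
  have hfb : ∀ n : Fin N, (∑ i ∈ Finset.univ.filter (· < n), δb i) = pb (n : ℕ) :=
    fun n => fin_filter_sum_aux N δb n
  have hfh : ∀ n : Fin N, (∑ i ∈ Finset.univ.filter (· < n), δh i) = pc (n : ℕ) :=
    fun n => fin_filter_sum_aux N δh n
  -- per-interval facts
  have hmain : ∀ k, ∀ hk : k < N,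
      (IntervalIntegrable (fun t => g (x t)) volume (pa k) (pa (k+1)) ∧
       IntervalIntegrable (fun t => g (xb t)) volume (pb k) (pb (k+1)) ∧
       IntervalIntegrable (fun t => g (xh t)) volume (pc k) (pc (k+1))) ∧
      (∫ t in pa k..pa (k+1), g (x t))
        = (∫ t in pb k..pb (k+1), g (xb t)) + ∫ t in pc k..pc (k+1), g (xh t) := by
    intro k hk
    set n : Fin N := ⟨k, hk⟩ with hn
    have hnk : ((n : ℕ) : ℝ) = (k : ℝ) := rfl
    have hpa1 : pa (k+1) = pa k + δ := by simp [hpa]; push_cast; ring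
    have hpb1 : pb (k+1) = pb k + δb n := by
      simp only [hpb, Finset.sum_range_succ]
      congr 1
      simp [hdb, hk, hn]
    have hpc1 : pc (k+1) = pc k + δh n := by
      simp only [hpc, Finset.sum_range_succ]
      congr 1
      simp [hdh, hk, hn]
    set A := x ((n : ℝ) * δ) with hA
    have hpan : (n : ℝ) * δ = pa k := by rw [hnk]
    -- x piece
    have hx' : ∀ t ∈ Set.Ioc (pa k) (pa k + δ), x t = A + v n * (t - pa k) := by
      intro t ht
      have h2 : ((n : ℝ) + 1) * δ = pa k + δ := by rw [hnk]; simp [hpa]; ring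
      rw [hx n t (by rw [hpan, h2]; exact ht), hpan]
    have h1 := seg_eq_aux g hg_cont hδpos.le hx'
    -- xb piece
    have hxb' : ∀ t ∈ Set.Ioc (pb k) (pb k + δb n), xb t = A + V * (t - pb k) := by
      intro t ht
      have := hxb n t (by rw [hfb n]; exact_mod_cast ht)
      rw [this, hfb n]
    have h2 := seg_eq_aux g hg_cont (hδb_nn n) hxb'
    -- xh piece
    have hxh' : ∀ t ∈ Set.Ioc (pc k) (pc k + δh n),
        xh t = A + (δ * v n / δh n) * (t - pc k) := by
      intro t ht
      have := hxh n t (by rw [hfh n]; exact_mod_cast ht)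
      rw [this, hfh n]
    have h3 := seg_eq_aux g hg_cont (hδh_nn n) hxh'
    refine ⟨⟨by rw [hpa1]; exact h1.1, by rw [hpb1]; exact h2.1, by rw [hpc1]; exact h3.1⟩, ?_⟩
    rw [hpa1, hpb1, hpc1, h1.2, h2.2, h3.2]
    have hthis := key_aux g A V (v n) δ hV hδpos (hv n).1 (hv n).2
    rw [← hδb n, ← hδh n] at hthis
    exact hthis
  -- assemble
  have hx_int : ∀ k < N, IntervalIntegrable (fun t => g (x t)) volume (pa k) (pa (k+1)) :=
    fun k hk => ((hmain k hk).1).1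
  have hxb_int : ∀ k < N, IntervalIntegrable (fun t => g (xb t)) volume (pb k) (pb (k+1)) :=
    fun k hk => ((hmain k hk).1).2.1
  have hxh_int : ∀ k < N, IntervalIntegrable (fun t => g (xh t)) volume (pc k) (pc (k+1)) :=
    fun k hk => ((hmain k hk).1).2.2
  have sx := intervalIntegral.sum_integral_adjacent_intervals hx_int
  have sb := intervalIntegral.sum_integral_adjacent_intervals hxb_int
  have sc := intervalIntegral.sum_integral_adjacent_intervals hxh_int
  have hpa0 : pa 0 = 0 := by simp [hpa]
  have hpaN : pa N = T := by simp [hpa, hTN]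
  have hpb0 : pb 0 = 0 := by simp [hpb]
  have hpc0 : pc 0 = 0 := by simp [hpc]
  have hpbN : pb N = ∑ n, δb n := by
    show ∑ j ∈ Finset.range N, db j = _
    rw [← Fin.sum_univ_eq_sum_range db N]
    exact Finset.sum_congr rfl (fun i _ => by simp [hdb, i.isLt])
  have hpcN : pc N = ∑ n, δh n := by
    show ∑ j ∈ Finset.range N, dh j = _
    rw [← Fin.sum_univ_eq_sum_range dh N]
    exact Finset.sum_congr rfl (fun i _ => by simp [hdh, i.isLt])
  rw [hpa0, hpaN] at sx
  rw [hpb0, hpbN] at sb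
  rw [hpc0, hpcN] at sc
  rw [← sx, ← sb, ← sc, ← Finset.sum_add_distrib]
  exact Finset.sum_congr rfl (fun k hk => (hmain k (Finset.mem_range.mp hk)).2)
end

section
/- At an optimizer of maximize ∑_k μ_k b_k ln(1 + c_k/b_k) subject to b_k > 0, ∑_k b_k = 1 (μ_k, c_k > 0), there exists η ≥ 0 such that for every k: μ_k [ln(1 + c_k/b_k) − (c_k/b_k)/(1 + c_k/b_k)] = η, and this stationarity condition is solved by c_k/b_k = −(1 + W(−e^{−(η/μ_k + 1)}))/W(−e^{−(η/μ_k + 1)}), where W is the principal branch of the Lambert W function. -/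
lemma hasDeriv_f {c x : ℝ} (hc : 0 < c) (hx : 0 < x) :
    HasDerivAt (fun y => y * Real.log (1 + c / y))
      (Real.log (1 + c / x) - (c / x) / (1 + c / x)) x := by
  have h1 : 0 < 1 + c / x := by positivity
  have hinner : HasDerivAt (fun y : ℝ => 1 + c / y) (-(c / x ^ 2)) x := by
    have := ((hasDerivAt_inv hx.ne').const_mul c).const_add 1
    exact (this.congr_deriv (by ring)).congr_of_eventuallyEq (Filter.Eventually.of_forall fun y => by simp [div_eq_mul_inv])
  have hlog : HasDerivAt (fun y => Real.log (1 + c / y))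
      (-(c / x ^ 2) / (1 + c / x)) x := hinner.log h1.ne'
  have := (hasDerivAt_id x).mul hlog
  refine (this.congr_deriv ?_).congr_of_eventuallyEq (Filter.Eventually.of_forall fun y => rfl)
  simp only [id]
  field_simp
  ring

lemma F_pos {x : ℝ} (hx : 0 < x) : 0 < Real.log (1 + x) - x / (1 + x) := by
  have h1 : 0 < 1 + x := by linarith
  have h2 : (1 + x)⁻¹ ≠ 1 := by
    intro h
    have : (1:ℝ) + x = 1 := by field_simp at h; linarith
    linarith
  have := Real.log_lt_sub_one_of_pos (by positivity) h2
  rw [Real.log_inv] at this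
  have hx' : x / (1 + x) = 1 - (1 + x)⁻¹ := by field_simp; ring
  linarith

theorem stmt_14 (K : ℕ) (hK : 0 < K) (c μ : Fin K → ℝ)
    (hc : ∀ k, 0 < c k) (hμ : ∀ k, 0 < μ k)
    (b : Fin K → ℝ) (hbpos : ∀ k, 0 < b k) (hbsum : ∑ k, b k = 1)
    (hopt : IsMaxOn (fun b' : Fin K → ℝ => ∑ k, μ k * (b' k * Real.log (1 + c k / b' k)))
      {b' : Fin K → ℝ | (∀ k, 0 < b' k) ∧ ∑ k, b' k = 1} b) :
    ∃ η : ℝ, 0 ≤ η ∧ ∀ k,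
      μ k * (Real.log (1 + c k / b k) - (c k / b k) / (1 + c k / b k)) = η ∧
      ∃ W : ℝ, W * Real.exp W = -Real.exp (-(η / μ k + 1)) ∧
        c k / b k = -(1 + W) / W := by
  haveI : NeZero K := ⟨hK.ne'⟩
  set F : Fin K → ℝ := fun k =>
    μ k * (Real.log (1 + c k / b k) - (c k / b k) / (1 + c k / b k)) with hF
  -- claim : all F k are equal
  have claim : ∀ i j : Fin K, F i = F j := by
    intro i j
    rcases eq_or_ne i j with rfl | hij
    · rfl
    set e : Fin K → ℝ := fun k => (if k = i then 1 else 0) - (if k = j then 1 else 0) with he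
    have he1 : ∀ k, |e k| ≤ 1 := by
      intro k
      simp only [he]
      split_ifs <;> simp_all <;> norm_num
    have hesum : ∑ k, e k = 0 := by
      simp [he, Finset.sum_sub_distrib, Finset.sum_ite_eq', Finset.mem_univ]
    obtain ⟨δ, hδpos, hδle⟩ : ∃ δ : ℝ, 0 < δ ∧ ∀ k, δ ≤ b k := by
      refine ⟨Finset.univ.inf' Finset.univ_nonempty b, ?_, ?_⟩
      · rw [Finset.lt_inf'_iff]; exact fun k _ => hbpos k
      · exact fun k => Finset.inf'_le _ (Finset.mem_univ k)
    set φ : ℝ → ℝ := fun t =>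
      ∑ k, μ k * ((b k + t * e k) * Real.log (1 + c k / (b k + t * e k))) with hφ
    have hbt : ∀ t : ℝ, |t| < δ → ∀ k, 0 < b k + t * e k := by
      intro t ht k
      have : |t * e k| ≤ |t| := by
        rw [abs_mul]
        calc |t| * |e k| ≤ |t| * 1 := by
              exact mul_le_mul_of_nonneg_left (he1 k) (abs_nonneg t)
          _ = |t| := mul_one _
      have h2 := neg_abs_le (t * e k)
      have := hδle k
      linarith
    have hmax : IsLocalMax φ 0 := by
      filter_upwards [Metric.ball_mem_nhds (0:ℝ) hδpos] with t ht
      have ht' : |t| < δ := by simpa [Real.dist_eq] using ht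
      have hmem : (fun k => b k + t * e k) ∈
          {b' : Fin K → ℝ | (∀ k, 0 < b' k) ∧ ∑ k, b' k = 1} := by
        constructor
        · exact hbt t ht' 
        · rw [Finset.sum_add_distrib, hbsum, ← Finset.mul_sum, hesum]; ring
      have := hopt hmem
      simpa [hφ] using this
    have hderiv : HasDerivAt φ (∑ k, μ k *
        (Real.log (1 + c k / b k) - (c k / b k) / (1 + c k / b k)) * e k) 0 := by
      apply HasDerivAt.fun_sum
      intro k _
      have ha : HasDerivAt (fun t : ℝ => b k + t * e k) (e k) 0 := by
        simpa using ((hasDerivAt_id (0:ℝ)).mul_const (e k)).const_add (b k)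
      have hf0 : HasDerivAt (fun y => y * Real.log (1 + c k / y))
          (Real.log (1 + c k / b k) - (c k / b k) / (1 + c k / b k)) (b k + 0 * e k) := by
        rw [show b k + (0:ℝ) * e k = b k by ring]
        exact hasDeriv_f (hc k) (hbpos k)
      have hf := hf0.comp 0 ha
      have := hf.const_mul (μ k)
      exact this.congr_deriv (by ring)
    have hzero := hmax.hasDerivAt_eq_zero hderiv
    have hsum : ∑ k, μ k *
        (Real.log (1 + c k / b k) - (c k / b k) / (1 + c k / b k)) * e k
        = F i - F j := by
      simp only [he, mul_sub, Finset.sum_sub_distrib, mul_ite, mul_one, mul_zero,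
        Finset.sum_ite_eq', Finset.mem_univ, if_true, hF]
    rw [hsum] at hzero
    linarith
  set k0 : Fin K := ⟨0, hK⟩
  refine ⟨F k0, ?_, ?_⟩
  · have := F_pos (show 0 < c k0 / b k0 from div_pos (hc k0) (hbpos k0))
    have := mul_pos (hμ k0) this
    exact le_of_lt this
  intro k
  have hFk : F k = F k0 := claim k k0
  constructor
  · exact hFk
  · set x : ℝ := c k / b k with hx
    have hxpos : 0 < x := div_pos (hc k) (hbpos k)
    have h1x : 0 < 1 + x := by linarith
    refine ⟨-(1 + x)⁻¹, ?_, ?_⟩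
    · have hηdiv : F k0 / μ k = Real.log (1 + x) - x / (1 + x) := by
        rw [← hFk]
        show μ k * (Real.log (1 + x) - x / (1 + x)) / μ k = _
        rw [mul_div_cancel_left₀ _ (hμ k).ne']
      have e1 : -(F k0 / μ k + 1) = Real.log (1 + x)⁻¹ + -(1 + x)⁻¹ := by
        rw [Real.log_inv, hηdiv]
        field_simp
        ring
      rw [e1, Real.exp_add, Real.exp_log (by positivity)]
      ring
    · have hne : (1 + x)⁻¹ ≠ 0 := by positivity
      field_simp
      ring
end
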